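/- Let g, h be nonzero polynomials in n variables over a field. Then the Newton polytope of the product satisfies P_{g·h} = P_g + P_h, where + denotes the Minkowski sum of polytopes. -/

import Mathlib

set_option maxHeartbeats 1000000


open scoped Pointwise

/-- The Newton polytope of a multivariate polynomial: the convex hull (in `ℝⁿ`)
of its exponent vectors. -/
noncomputable def newtonPolytope {n : ℕ} {F : Type*} [Field F]
    (f : MvPolynomial (Fin n) F) : Set (Fin n → ℝ) :=
  convexHull ℝ ((fun m : Fin n →₀ ℕ => fun i => (m i : ℝ)) '' f.support)

/-- The embedding of exponent vectors into `ℝⁿ`, as an additive monoid hom. -/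
noncomputable def expEmb (n : ℕ) : (Fin n →₀ ℕ) →+ (Fin n → ℝ) where
  toFun m := fun i => (m i : ℝ)
  map_zero' := by ext i; simp
  map_add' a b := by ext i; simp

lemma expEmb_injective (n : ℕ) : Function.Injective (expEmb n) := by
  intro a b hab
  ext i
  have : (expEmb n) a i = (expEmb n) b i := congrFun hab i
  simpa [expEmb] using this

/-- Ostrowski's theorem: the Newton polytope of a product is the Minkowski sum
of the Newton polytopes of the factors. -/
theorem newtonPolytope_mul {n : ℕ} {F : Type*} [Field F]
    (g h : MvPolynomial (Fin n) F) (hg : g ≠ 0) (hh : h ≠ 0) :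
    newtonPolytope (g * h) = newtonPolytope g + newtonPolytope h := by
  classical
  set e : (Fin n →₀ ℕ) → (Fin n → ℝ) := fun m => fun i => (m i : ℝ) with he
  have he' : e = ⇑(expEmb n) := rfl
  set A : Set (Fin n → ℝ) := e '' g.support with hA
  set B : Set (Fin n → ℝ) := e '' h.support with hB
  have himg : e '' ((g.support + h.support : Finset (Fin n →₀ ℕ)) : Set (Fin n →₀ ℕ))
      = A + B := by
    rw [Finset.coe_add, hA, hB, he', Set.image_add]
  have hAB_fin : (A + B).Finite := by
    rw [← himg]; exact (Finset.finite_toSet _).image _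
  -- key step: every extreme point of `convexHull ℝ (A + B)` is in the image of
  -- the support of `g * h`.
  have hext : (convexHull ℝ (A + B)).extremePoints ℝ ⊆ e '' ((g * h).support : Set _) := by
    intro v hv
    have hvAB : v ∈ A + B := extremePoints_convexHull_subset hv
    obtain ⟨x, hx, y, hy, hxy⟩ := hvAB
    obtain ⟨a, ha, rfl⟩ := hx
    obtain ⟨b, hb, rfl⟩ := hy
    have hxy' : e a + e b = v := hxy
    rw [mem_extremePoints] at hv
    -- uniqueness of the decomposition
    have huniq : ∀ p ∈ g.support, ∀ q ∈ h.support, p + q = a + b → p = a ∧ q = b := by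
      intro p hp q hq hpq
      have hpq' : e p + e q = v := by
        rw [← hxy', he', ← map_add, ← map_add, hpq]
      have h1 : e p + e b ∈ A + B := Set.add_mem_add ⟨p, hp, rfl⟩ ⟨b, hb, rfl⟩
      have h2 : e a + e q ∈ A + B := Set.add_mem_add ⟨a, ha, rfl⟩ ⟨q, hq, rfl⟩
      have h1' : e p + e b ∈ convexHull ℝ (A + B) := subset_convexHull ℝ _ h1
      have h2' : e a + e q ∈ convexHull ℝ (A + B) := subset_convexHull ℝ _ h2
      have hsum : (e p + e b) + (e a + e q) = v + v := by
        calc (e p + e b) + (e a + e q) = (e p + e q) + (e a + e b) := by abel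
          _ = v + v := by rw [hpq', hxy']
      have hpa : e p + e b = v := by
        by_cases hc : e p + e b = e a + e q
        · have h2s : (2 : ℝ) • (e p + e b) = (2 : ℝ) • v := by
            rw [two_smul, two_smul]
            calc (e p + e b) + (e p + e b) = (e p + e b) + (e a + e q) := by rw [hc]
              _ = v + v := hsum
          exact smul_right_injective _ (by norm_num : (2:ℝ) ≠ 0) h2s
        · have hmid : v ∈ openSegment ℝ (e p + e b) (e a + e q) := by
            rw [mem_openSegment_iff_div]
            refine ⟨1, 1, one_pos, one_pos, ?_⟩
            have hhalf : ((1:ℝ)/(1+1)) • ((e p + e b) + (e a + e q)) = v := by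
              rw [hsum, smul_add, ← add_smul]
              norm_num
            rw [← hhalf, ← smul_add]
          exact (hv.2 _ h1' _ h2' hmid).1
      have hpa' : p = a := by
        apply expEmb_injective n
        show e p = e a
        have hhh : e p + e b = e a + e b := by rw [hpa, ← hxy']
        exact add_right_cancel hhh
      refine ⟨hpa', ?_⟩
      subst hpa'
      exact add_left_cancel hpq
    -- the coefficient of `g*h` at `a+b` is `coeff a g * coeff b h ≠ 0`
    have hcoeff : (g * h).coeff (a + b) = g.coeff a * h.coeff b := by
      rw [MvPolynomial.coeff_mul]
      rw [Finset.sum_eq_single (a, b)]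
      · intro pq hpq hne
        rw [Finset.HasAntidiagonal.mem_antidiagonal] at hpq
        by_cases hp : pq.1 ∈ g.support
        · by_cases hq : pq.2 ∈ h.support
          · obtain ⟨e1, e2⟩ := huniq _ hp _ hq hpq
            exact absurd (Prod.ext e1 e2) hne
          · rw [MvPolynomial.notMem_support_iff.mp hq, mul_zero]
        · rw [MvPolynomial.notMem_support_iff.mp hp, zero_mul]
      · intro habs
        refine absurd (Finset.HasAntidiagonal.mem_antidiagonal.mpr ?_) habs
        show a + b = a + b
        rfl
    have hne : (g * h).coeff (a + b) ≠ 0 := by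
      rw [hcoeff]
      exact mul_ne_zero (MvPolynomial.mem_support_iff.mp ha)
        (MvPolynomial.mem_support_iff.mp hb)
    refine ⟨a + b, ?_, ?_⟩
    · exact MvPolynomial.mem_support_iff.mpr hne
    · rw [he', map_add]
      rw [← he', hxy']
  -- now assemble
  have hsub1 : newtonPolytope (g * h) ⊆ newtonPolytope g + newtonPolytope h := by
    rw [newtonPolytope, newtonPolytope, newtonPolytope, ← convexHull_add, ← hA, ← hB, ← himg]
    exact convexHull_mono (Set.image_mono (f := e) (by exact_mod_cast MvPolynomial.support_mul g h))
  have hsub2 : newtonPolytope g + newtonPolytope h ⊆ newtonPolytope (g * h) := by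
    rw [newtonPolytope, newtonPolytope, newtonPolytope, ← convexHull_add, ← hA, ← hB]
    have hT_closed : IsClosed (convexHull ℝ (e '' ((g * h).support : Set _))) :=
      (((Finset.finite_toSet _).image e).isCompact_convexHull ℝ).isClosed
    have hKM := closure_convexHull_extremePoints (hAB_fin.isCompact_convexHull ℝ)
      (convex_convexHull ℝ (A + B))
    calc convexHull ℝ (A + B)
        = closure (convexHull ℝ ((convexHull ℝ (A + B)).extremePoints ℝ)) := hKM.symm
      _ ⊆ closure (convexHull ℝ (e '' ((g * h).support : Set _))) :=
          closure_mono (convexHull_mono hext)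
      _ = convexHull ℝ (e '' ((g * h).support : Set _)) := hT_closed.closure_eq
  exact le_antisymm hsub1 hsub2
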